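/- arXiv:1212.0025 — 2 statements merged into one kernel-verified Lean document; each statement's English description precedes it below -/
import Mathlib

section
/- For any n×n complex matrix A, |Per(A)| ≤ ‖A‖^n, where ‖A‖ is the operator norm of A. -/
open Matrix

/-- The operator (spectral) 2-norm of a complex matrix. -/
noncomputable def opNorm {m k : ℕ} (A : Matrix (Fin m) (Fin k) ℂ) : ℝ :=
  ‖LinearMap.toContinuousLinearMap (Matrix.toEuclideanLin A)‖

def sgn (b : Bool) : ℂ := if b then 1 else -1

lemma abs_sgn (b : Bool) : ‖sgn b‖ = 1 := by cases b <;> simp [sgn]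

lemma char_sum (n : ℕ) (f : Fin n → Fin n) :
    ∑ ε : Fin n → Bool, (∏ j, sgn (ε j)) * ∏ i, sgn (ε (f i)) =
      if Function.Bijective f then (2:ℂ)^n else 0 := by
  classical
  have h1 : ∀ ε : Fin n → Bool, (∏ j, sgn (ε j)) * ∏ i, sgn (ε (f i))
      = ∏ j, sgn (ε j) ^ ((Finset.univ.filter fun i => f i = j).card + 1) := by
    intro ε
    have h2 : ∏ i, sgn (ε (f i))
        = ∏ j, sgn (ε j) ^ (Finset.univ.filter fun i => f i = j).card := by
      rw [Finset.prod_comp (fun j => sgn (ε j)) f]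
      refine Finset.prod_subset (Finset.subset_univ _) ?_
      intro x _ hx
      have : (Finset.univ.filter fun i => f i = x).card = 0 := by
        rw [Finset.card_eq_zero, Finset.filter_eq_empty_iff]
        intro i _
        exact fun h => hx (Finset.mem_image.mpr ⟨i, Finset.mem_univ i, h⟩)
      simp [this]
    rw [h2, ← Finset.prod_mul_distrib]
    exact Finset.prod_congr rfl fun j _ => by ring
  simp_rw [h1]
  rw [← Fintype.prod_sum (fun j b => sgn b ^ ((Finset.univ.filter fun i => f i = j).card + 1))]
  have hb : ∀ e : ℕ, ∑ b : Bool, sgn b ^ e = 1 + (-1)^e := by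
    intro e; simp [sgn, Fintype.sum_bool, add_comm]
  simp_rw [hb]
  by_cases hf : Function.Bijective f
  · rw [if_pos hf]
    have hc : ∀ j, (Finset.univ.filter fun i => f i = j).card = 1 := by
      intro j
      let σ := Equiv.ofBijective f hf
      have : (Finset.univ.filter fun i => f i = j) = {σ.symm j} := by
        ext i
        simp only [Finset.mem_filter, Finset.mem_univ, true_and, Finset.mem_singleton]
        constructor
        · intro h; exact σ.symm_apply_eq.mpr h.symm ▸ rfl
        · intro h; subst h; exact σ.apply_symm_apply j
      rw [this, Finset.card_singleton]
    simp only [hc, pow_succ, pow_one]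
    norm_num
  · rw [if_neg hf]
    have hsurj : ¬ Function.Surjective f := by
      intro hs
      exact hf ((Finite.surjective_iff_bijective).mp hs)
    simp only [Function.Surjective, not_forall, not_exists] at hsurj
    obtain ⟨j, hj⟩ := hsurj
    refine Finset.prod_eq_zero (Finset.mem_univ j) ?_
    have : (Finset.univ.filter fun i => f i = j).card = 0 := by
      rw [Finset.card_eq_zero, Finset.filter_eq_empty_iff]
      exact fun i _ h => hj i h
    simp [this]

lemma key (n : ℕ) (A : Matrix (Fin n) (Fin n) ℂ) :
    ∑ ε : Fin n → Bool, (∏ j, sgn (ε j)) * ∏ i, (∑ j, A i j * sgn (ε j)) =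
      (2:ℂ)^n * ∑ σ : Equiv.Perm (Fin n), ∏ i, A i (σ i) := by
  classical
  have h1 : ∀ ε : Fin n → Bool, ∏ i, (∑ j, A i j * sgn (ε j))
      = ∑ f : Fin n → Fin n, (∏ i, A i (f i)) * ∏ i, sgn (ε (f i)) := by
    intro ε
    rw [Fintype.prod_sum (fun i j => A i j * sgn (ε j))]
    exact Finset.sum_congr rfl fun f _ => Finset.prod_mul_distrib
  simp_rw [h1, Finset.mul_sum]
  rw [Finset.sum_comm]
  have h2 : ∀ f : Fin n → Fin n,
      ∑ ε : Fin n → Bool, (∏ j, sgn (ε j)) * ((∏ i, A i (f i)) * ∏ i, sgn (ε (f i)))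
      = (∏ i, A i (f i)) * if Function.Bijective f then (2:ℂ)^n else 0 := by
    intro f
    rw [← char_sum n f, Finset.mul_sum]
    exact Finset.sum_congr rfl fun ε _ => by ring
  simp_rw [h2, mul_ite, mul_zero]
  rw [Finset.sum_ite, Finset.sum_const_zero, add_zero]
  refine Finset.sum_bij
    (fun f hf => Equiv.ofBijective f (Finset.mem_filter.mp hf).2) (fun _ _ => Finset.mem_univ _)
    ?_ ?_ ?_
  · intro f hf g hg h
    have : ⇑(Equiv.ofBijective f (Finset.mem_filter.mp hf).2) =
        ⇑(Equiv.ofBijective g (Finset.mem_filter.mp hg).2) := congrArg _ h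
    exact this
  · intro σ _
    refine ⟨⇑σ, Finset.mem_filter.mpr ⟨Finset.mem_univ _, σ.bijective⟩, ?_⟩
    exact Equiv.coe_fn_injective rfl
  · intro f hf
    simp only [Equiv.ofBijective_apply]
    ring

lemma prod_bound {n : ℕ} (A : Matrix (Fin n) (Fin n) ℂ) (x : Fin n → ℂ)
    (hx : ∀ j, ‖x j‖ = 1) :
    ∏ i, ‖(A *ᵥ x) i‖ ≤ opNorm A ^ n := by
  rcases Nat.eq_zero_or_pos n with hn | hn
  · subst hn; simp
  set B := opNorm A with hB
  have hB0 : 0 ≤ B := norm_nonneg _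
  set v := A *ᵥ x with hv
  -- norm bound
  have h1 : ‖(WithLp.equiv 2 (Fin n → ℂ)).symm v‖ ≤ B * ‖(WithLp.equiv 2 (Fin n → ℂ)).symm x‖ := by
    change ‖Matrix.toEuclideanLin A ((WithLp.equiv 2 (Fin n → ℂ)).symm x)‖ ≤ _; rw [hB]
    unfold opNorm
    have := (LinearMap.toContinuousLinearMap (Matrix.toEuclideanLin A)).le_opNorm
      ((WithLp.equiv 2 (Fin n → ℂ)).symm x)
    simpa only [LinearMap.coe_toContinuousLinearMap'] using this
  have hxnorm : ‖(WithLp.equiv 2 (Fin n → ℂ)).symm x‖ = Real.sqrt n := by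
    rw [EuclideanSpace.norm_eq]
    simp [hx]
  have hvnorm : ‖(WithLp.equiv 2 (Fin n → ℂ)).symm v‖
      = Real.sqrt (∑ i, ‖v i‖ ^ 2) := by
    rw [EuclideanSpace.norm_eq]
    simp
  have hsum0 : 0 ≤ ∑ i, ‖v i‖ ^ 2 :=
    Finset.sum_nonneg fun i _ => sq_nonneg _
  have h3 : ∑ i, ‖v i‖ ^ 2 ≤ B ^ 2 * n := by
    have h2 : Real.sqrt (∑ i, ‖v i‖ ^ 2) ≤ B * Real.sqrt n := by
      rw [← hvnorm, ← hxnorm]; exact h1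
    have := pow_le_pow_left₀ (Real.sqrt_nonneg _) h2 2
    rw [Real.sq_sqrt hsum0] at this
    calc ∑ i, ‖v i‖ ^ 2 ≤ (B * Real.sqrt n) ^ 2 := this
      _ = B ^ 2 * (Real.sqrt n) ^ 2 := by ring
      _ = B ^ 2 * n := by rw [Real.sq_sqrt (Nat.cast_nonneg n)]
  -- AM-GM
  set z := fun i => ‖v i‖ ^ 2 with hz
  have hz0 : ∀ i ∈ Finset.univ, (0:ℝ) ≤ z i := fun i _ => sq_nonneg _
  have hnn : (n:ℝ) ≠ 0 := Nat.cast_ne_zero.mpr hn.ne'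
  have hw : ∑ _i : Fin n, (1/n : ℝ) = 1 := by
    simp [Finset.sum_const, Finset.card_univ]
    field_simp
  have amgm := Real.geom_mean_le_arith_mean_weighted Finset.univ (fun _ => (1/n : ℝ)) z
    (fun i _ => by positivity) hw hz0
  have hlhs : ∏ i, z i ^ (1/n : ℝ) = (∏ i, z i) ^ (1/n : ℝ) := by
    rw [← Real.finset_prod_rpow Finset.univ z hz0]
  have hrhs : ∑ i, (1/n : ℝ) * z i ≤ B ^ 2 := by
    rw [← Finset.mul_sum]
    rw [div_mul_eq_mul_div, one_mul, div_le_iff₀ (by positivity)]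
    calc ∑ i, z i ≤ B ^ 2 * n := h3
      _ = B ^ 2 * n := rfl
  have hprod0 : 0 ≤ ∏ i, z i := Finset.prod_nonneg hz0
  have key : ∏ i, z i ≤ (B ^ 2) ^ n := by
    have h4 : (∏ i, z i) ^ (1/n : ℝ) ≤ B ^ 2 := by
      rw [← hlhs]; exact le_trans amgm hrhs
    have h5 := pow_le_pow_left₀ (Real.rpow_nonneg hprod0 _) h4 n
    rwa [← Real.rpow_natCast ((∏ i, z i) ^ (1/n : ℝ)) n, ← Real.rpow_mul hprod0,
      one_div, inv_mul_cancel₀ hnn, Real.rpow_one] at h5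
  have hfinal : (∏ i, ‖v i‖) ^ 2 ≤ (B ^ n) ^ 2 := by
    rw [← Finset.prod_pow]
    calc ∏ i, ‖v i‖ ^ 2 ≤ (B ^ 2) ^ n := key
      _ = (B ^ n) ^ 2 := by rw [← pow_mul, ← pow_mul, Nat.mul_comm]
  exact (pow_le_pow_iff_left₀ (Finset.prod_nonneg fun i _ => norm_nonneg _)
    (pow_nonneg hB0 n) two_ne_zero).mp hfinal

/-- For any `n × n` complex matrix `A`, the permanent satisfies `|Per(A)| ≤ ‖A‖^n`. -/
theorem permanent_le_opNorm_pow (n : ℕ) (A : Matrix (Fin n) (Fin n) ℂ) :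
    ‖∑ σ : Equiv.Perm (Fin n), ∏ i, A i (σ i)‖ ≤ opNorm A ^ n := by
  have hkey := key n A
  have habs := congrArg norm hkey
  rw [norm_mul, norm_pow] at habs
  have h2 : ‖(2:ℂ)‖ = 2 := by simp
  rw [h2] at habs
  have hS : ‖∑ ε : Fin n → Bool, (∏ j, sgn (ε j)) * ∏ i, (∑ j, A i j * sgn (ε j))‖
      ≤ 2 ^ n * opNorm A ^ n := by
    refine le_trans (norm_sum_le _ _) ?_
    have hterm : ∀ ε : Fin n → Bool,
        ‖(∏ j, sgn (ε j)) * ∏ i, (∑ j, A i j * sgn (ε j))‖ ≤ opNorm A ^ n := by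
      intro ε
      rw [norm_mul, norm_prod, norm_prod]
      simp only [abs_sgn, Finset.prod_const_one, one_mul]
      have hm : ∀ i, (∑ j, A i j * sgn (ε j)) = (A *ᵥ fun j => sgn (ε j)) i := by
        intro i; simp [Matrix.mulVec, dotProduct]
      simp_rw [hm]
      exact prod_bound A (fun j => sgn (ε j)) (fun j => abs_sgn (ε j))
    calc ∑ ε : Fin n → Bool, ‖(∏ j, sgn (ε j)) * ∏ i, (∑ j, A i j * sgn (ε j))‖
        ≤ ∑ _ε : Fin n → Bool, opNorm A ^ n := Finset.sum_le_sum fun ε _ => hterm ε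
      _ = 2 ^ n * opNorm A ^ n := by
          rw [Finset.sum_const, Finset.card_univ]
          simp [Fintype.card_fun]
  rw [habs] at hS
  have hpos : (0:ℝ) < 2 ^ n := by positivity
  exact le_of_mul_le_mul_left hS hpos
end

section
/- Let B be an n×k complex matrix, s_1,…,s_k positive integers summing to n, and A the n×n matrix consisting of s_j copies of the j-th column of B for each j. Let X = R[s_1+1] × ⋯ × R[s_k+1] where R[m] is the set of m-th roots of unity. For x ∈ X define y_j = √(s_j)·x_j and GenGly_x(A) := (s_1!⋯s_k!)/(s_1^{s_1}⋯s_k^{s_k}) · conj(y_1)^{s_1}⋯conj(y_k)^{s_k} · ∏_{i=1}^n (y_1 b_{i,1} + ⋯ + y_k b_{i,k}). Then E_{x ∈ X}[GenGly_x(A)] = Per(A), where the expectation is uniform over X. -/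
/-- `root m t = e^{2πit/m}`, the `t`-th among the `m`-th roots of unity. -/
noncomputable def root (m t : ℕ) : ℂ :=
  Complex.exp (2 * Real.pi * Complex.I * t / m)

section helpers
open Finset
lemma root_one_prim (m : ℕ) (hm : m ≠ 0) : IsPrimitiveRoot (root m 1) m := by
  have := Complex.isPrimitiveRoot_exp m hm
  convert this using 2
  unfold root; congr 1; push_cast; ring

lemma root_eq_pow (m t : ℕ) : root m t = root m 1 ^ t := by
  unfold root
  rw [← Complex.exp_nat_mul]
  congr 1
  push_cast; ring

lemma root_ne_zero (m t : ℕ) : root m t ≠ 0 := Complex.exp_ne_zero _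

lemma conj_root (m t : ℕ) : (starRingEnd ℂ) (root m t) = (root m t)⁻¹ := by
  unfold root
  rw [← Complex.exp_conj, ← Complex.exp_neg]
  congr 1
  simp [map_ofNat]
  ring

lemma sum_geom (s : ℕ) (w : ℂ) (hw : w ^ (s+1) = 1) :
    ∑ t : Fin (s+1), w ^ (t:ℕ) = if w = 1 then ((s:ℂ)+1) else 0 := by
  rw [Fin.sum_univ_eq_sum_range]
  split_ifs with h
  · subst h; simp
  · rw [geom_sum_eq h, hw]; simp

lemma T_gen (s m : ℕ) :
    ∑ t : Fin (s+1), (starRingEnd ℂ) ((Real.sqrt s : ℂ) * root (s+1) t) ^ s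
        * ((Real.sqrt s : ℂ) * root (s+1) t) ^ m
    = ((Real.sqrt s : ℂ))^(s+m) *
        (if ((s:ℤ)+1) ∣ ((m:ℤ) - s) then ((s:ℂ)+1) else 0) := by
  set ζ := root (s+1) 1 with hζdef
  have hζ : IsPrimitiveRoot ζ (s+1) := root_one_prim _ (Nat.succ_ne_zero s)
  have hζ0 : ζ ≠ 0 := root_ne_zero _ _
  set w : ℂ := ζ ^ ((m:ℤ) - (s:ℤ)) with hwdef
  have key : ∀ t : Fin (s+1),
      (starRingEnd ℂ) ((Real.sqrt s : ℂ) * root (s+1) t) ^ s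
        * ((Real.sqrt s : ℂ) * root (s+1) t) ^ m
      = ((Real.sqrt s : ℂ))^(s+m) * w ^ (t:ℕ) := by
    intro t
    rw [map_mul, conj_root, Complex.conj_ofReal, root_eq_pow, ← hζdef]
    rw [mul_pow, mul_pow]
    have : ((ζ ^ (t:ℕ))⁻¹) ^ s * (ζ ^ (t:ℕ)) ^ m = w ^ (t:ℕ) := by
      rw [hwdef, ← zpow_natCast ζ (t:ℕ), ← zpow_neg, ← zpow_natCast _ s,
        ← zpow_natCast _ m, ← zpow_mul, ← zpow_mul, ← zpow_add₀ hζ0,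
        ← zpow_natCast (ζ ^ ((m:ℤ) - (s:ℤ))) (t:ℕ), ← zpow_mul]
      congr 1; push_cast; ring
    rw [pow_add]
    calc ((Real.sqrt s : ℂ))^s * (ζ ^ (t:ℕ))⁻¹ ^ s * (((Real.sqrt s : ℂ))^m * (ζ ^ (t:ℕ)) ^ m)
        = ((Real.sqrt s : ℂ))^s * ((Real.sqrt s : ℂ))^m * (((ζ ^ (t:ℕ))⁻¹) ^ s * (ζ ^ (t:ℕ)) ^ m) := by ring
      _ = _ := by rw [this]
  rw [Finset.sum_congr rfl (fun t _ => key t), ← Finset.mul_sum]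
  congr 1
  have hw1 : w ^ (s+1) = 1 := by
    rw [hwdef, ← zpow_natCast _ (s+1), ← zpow_mul, mul_comm, zpow_mul,
      zpow_natCast, hζ.pow_eq_one, one_zpow]
  rw [sum_geom s w hw1]
  have : w = 1 ↔ ((s:ℤ)+1) ∣ ((m:ℤ) - s) := by
    rw [hwdef, hζ.zpow_eq_one_iff_dvd]
    push_cast; rfl
  split_ifs with h1 h2 h2
  · rfl
  · exact absurd (this.mp h1) h2
  · exact absurd (this.mpr h2) h1
  · rfl

lemma T_lt (s m : ℕ) (h : m < s) :
    ∑ t : Fin (s+1), (starRingEnd ℂ) ((Real.sqrt s : ℂ) * root (s+1) t) ^ s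
        * ((Real.sqrt s : ℂ) * root (s+1) t) ^ m = 0 := by
  rw [T_gen]
  have : ¬ ((s:ℤ)+1) ∣ ((m:ℤ) - s) := by
    intro hd
    have hd' : ((s:ℤ)+1) ∣ ((s:ℤ) - m) := by have := dvd_neg.mpr hd; rwa [neg_sub] at this
    have h1 : (0:ℤ) < (s:ℤ) - m := by omega
    have := Int.le_of_dvd h1 hd'
    omega
  rw [if_neg this, mul_zero]

lemma T_eq (s : ℕ) :
    ∑ t : Fin (s+1), (starRingEnd ℂ) ((Real.sqrt s : ℂ) * root (s+1) t) ^ s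
        * ((Real.sqrt s : ℂ) * root (s+1) t) ^ s
    = (s:ℂ)^s * ((s:ℂ)+1) := by
  rw [T_gen, if_pos (by simp)]
  congr 1
  have : ((Real.sqrt s : ℂ))^(s+s) = (((Real.sqrt s)^2 : ℝ) : ℂ)^s := by
    push_cast; ring
  rw [this, Real.sq_sqrt (Nat.cast_nonneg s)]
  norm_num


section Perm
variable {n k : ℕ} (c g : Fin n → Fin k)

/-- The equiv between permutations intertwining `c`,`g` and families of fiber bijections. -/
noncomputable def permFiberEquiv :
    {σ : Equiv.Perm (Fin n) // ∀ i, c (σ i) = g i} ≃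
      (∀ j, {i // g i = j} ≃ {i // c i = j}) where
  toFun σ := fun j =>
    { toFun := fun x => ⟨σ.1 x.1, by rw [σ.2, x.2]⟩
      invFun := fun x => ⟨σ.1.symm x.1, by
        have := σ.2 (σ.1.symm x.1)
        rw [Equiv.apply_symm_apply] at this
        rw [← this, x.2]⟩
      left_inv := fun x => by simp
      right_inv := fun x => by simp }
  invFun e :=
    ⟨(Equiv.sigmaFiberEquiv g).symm.trans
      ((Equiv.sigmaCongrRight e).trans (Equiv.sigmaFiberEquiv c)),
      fun i => (e (g i) ⟨i, rfl⟩).2⟩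
  left_inv σ := by
    apply Subtype.ext
    apply Equiv.ext
    intro i
    rfl
  right_inv e := by
    funext j
    ext x
    obtain ⟨i, hi⟩ := x
    subst hi
    rfl

lemma card_perm_fiber (s : Fin k → ℕ)
    (hc : ∀ j, (Finset.univ.filter fun i => c i = j).card = s j)
    (hg : ∀ j, (Finset.univ.filter fun i => g i = j).card = s j) :
    Fintype.card {σ : Equiv.Perm (Fin n) // ∀ i, c (σ i) = g i}
      = ∏ j, (s j).factorial := by
  rw [Fintype.card_congr (permFiberEquiv c g), Fintype.card_pi]
  apply Finset.prod_congr rfl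
  intro j _
  have h1 : Fintype.card {i // g i = j} = s j := by
    rw [Fintype.card_subtype]; exact hg j
  have h2 : Fintype.card {i // c i = j} = s j := by
    rw [Fintype.card_subtype]; exact hc j
  rw [Fintype.card_equiv (Fintype.equivOfCardEq (h1.trans h2.symm)), h1]

lemma fiber_card_of_perm (σ : Equiv.Perm (Fin n)) (h : ∀ i, c (σ i) = g i) (j : Fin k) :
    (Finset.univ.filter fun i => g i = j).card
      = (Finset.univ.filter fun i => c i = j).card := by
  apply Finset.card_bij (fun i _ => σ i)
  · intro i hi
    simp only [Finset.mem_filter, Finset.mem_univ, true_and] at hi ⊢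
    rw [h, hi]
  · intro a _ b _ hab
    exact σ.injective hab
  · intro x hx
    simp only [Finset.mem_filter, Finset.mem_univ, true_and] at hx ⊢
    refine ⟨σ.symm x, ?_, by simp⟩
    rw [← h (σ.symm x), Equiv.apply_symm_apply, hx]

lemma perm_sum (s : Fin k → ℕ)
    (hc : ∀ j, (Finset.univ.filter fun i => c i = j).card = s j)
    (P : (Fin n → Fin k) → ℂ) :
    ∑ σ : Equiv.Perm (Fin n), P (c ∘ σ) =
      ∑ g ∈ Finset.univ.filter
          (fun g : Fin n → Fin k => ∀ j, (Finset.univ.filter fun i => g i = j).card = s j),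
        ((∏ j, (s j).factorial : ℕ) : ℂ) * P g := by
  classical
  rw [← Finset.sum_fiberwise_of_maps_to (g := fun σ : Equiv.Perm (Fin n) => c ∘ ⇑σ)
    (fun σ _ => Finset.mem_univ _) (fun σ => P (c ∘ ⇑σ))]
  rw [Finset.sum_filter]
  apply Finset.sum_congr rfl
  intro g _
  have inner : ∑ σ ∈ Finset.univ.filter (fun (σ : Equiv.Perm (Fin n)) => c ∘ ⇑σ = g), P (c ∘ ⇑σ)
      = (Finset.univ.filter (fun (σ : Equiv.Perm (Fin n)) => c ∘ ⇑σ = g)).card * P g := by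
    rw [Finset.sum_congr rfl (fun σ hσ => by
      rw [(Finset.mem_filter.mp hσ).2]), Finset.sum_const, nsmul_eq_mul]
  rw [inner]
  have hcard : (Finset.univ.filter (fun (σ : Equiv.Perm (Fin n)) => c ∘ ⇑σ = g)).card
      = Fintype.card {σ : Equiv.Perm (Fin n) // ∀ i, c (σ i) = g i} := by
    rw [Fintype.card_subtype]
    congr 1
    ext σ
    simp [funext_iff]
  by_cases hM : ∀ j, (Finset.univ.filter fun i => g i = j).card = s j
  · rw [if_pos hM, hcard, card_perm_fiber c g s hc hM]
  · rw [if_neg hM, hcard]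
    have : Fintype.card {σ : Equiv.Perm (Fin n) // ∀ i, c (σ i) = g i} = 0 := by
      rw [Fintype.card_eq_zero_iff]
      constructor
      intro ⟨σ, hσ⟩
      exact hM (fun j => (fiber_card_of_perm c g σ hσ j).trans (hc j))
    rw [this]
    simp

end Perm


section aux

lemma prod_comp_fiber {n k : ℕ} (g : Fin n → Fin k) (v : Fin k → ℂ) :
    ∏ i, v (g i) = ∏ j, v j ^ (Finset.univ.filter fun i => g i = j).card := by
  rw [← Finset.prod_fiberwise_of_maps_to (fun i (_ : i ∈ Finset.univ) => Finset.mem_univ (g i))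
    (fun i => v (g i))]
  apply Finset.prod_congr rfl
  intro j _
  rw [Finset.prod_congr rfl (fun i hi => by rw [(Finset.mem_filter.mp hi).2]),
    Finset.prod_const]

lemma sum_fiber_card {n k : ℕ} (g : Fin n → Fin k) :
    ∑ j, (Finset.univ.filter fun i => g i = j).card = n := by
  rw [← Finset.card_eq_sum_card_fiberwise (fun i (_ : i ∈ Finset.univ) => Finset.mem_univ (g i))]
  simp

end aux


end helpers

/-- **The generalized Glynn estimator is unbiased.**  Let `B` be `n × k`, let `s_1,…,s_k > 0`
sum to `n`, and let `A` be the `n × n` matrix consisting of `s_j` copies of the `j`-th column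
of `B` (encoded by `c : Fin n → Fin k` with `|c⁻¹(j)| = s_j` and `A i m = B i (c m)`).
With `x` uniform on `X = R[s_1+1] × ⋯ × R[s_k+1]` and `y_j = √(s_j)·x_j`,
`E_x[GenGly_x(A)] = Per(A)` where
`GenGly_x(A) = (s_1!⋯s_k!)/(s_1^{s_1}⋯s_k^{s_k}) · conj(y_1)^{s_1}⋯conj(y_k)^{s_k} · ∏_i (By)_i`. -/
theorem genGlynn_expectation (n k : ℕ) (s : Fin k → ℕ)
    (hpos : ∀ j, 0 < s j) (hsum : ∑ j, s j = n)
    (B : Matrix (Fin n) (Fin k) ℂ) (c : Fin n → Fin k)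
    (hc : ∀ j, (Finset.univ.filter fun i => c i = j).card = s j)
    (A : Matrix (Fin n) (Fin n) ℂ) (hA : ∀ i m, A i m = B i (c m)) :
    (∑ f : (∀ j, Fin (s j + 1)),
        ((∏ j, (s j).factorial : ℕ) : ℂ) / (∏ j, (s j : ℂ) ^ s j) *
          (∏ j, (starRingEnd ℂ) ((Real.sqrt (s j) : ℂ) * root (s j + 1) (f j)) ^ s j) *
          ∏ i, ∑ j, ((Real.sqrt (s j) : ℂ) * root (s j + 1) (f j)) * B i j)
        / (∏ j, ((s j : ℂ) + 1))
      = ∑ σ : Equiv.Perm (Fin n), ∏ i, A i (σ i) := by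
  classical
  set C : ℂ := ((∏ j, (s j).factorial : ℕ) : ℂ) / (∏ j, (s j : ℂ) ^ s j) with hC
  set Nf : ℂ := ((∏ j, (s j).factorial : ℕ) : ℂ) with hNf
  set D : ℂ := ∏ j, ((s j : ℂ) + 1) with hD
  set S : ℂ := ∏ j, (s j : ℂ) ^ s j with hSdef
  have hDne : D ≠ 0 := by
    rw [hD]
    refine Finset.prod_ne_zero_iff.mpr (fun j _ => ?_)
    have h1 : ((s j : ℂ) + 1) = ((s j + 1 : ℕ) : ℂ) := by push_cast; ring
    rw [h1]
    exact_mod_cast (Nat.succ_ne_zero (s j))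
  have hSne : S ≠ 0 := by
    rw [hSdef]
    exact Finset.prod_ne_zero_iff.mpr
      (fun j _ => pow_ne_zero _ (by exact_mod_cast (hpos j).ne'))
  -- the right-hand side, grouped by fibers
  have hRHS : ∑ σ : Equiv.Perm (Fin n), ∏ i, A i (σ i)
      = ∑ g ∈ Finset.univ.filter
          (fun g : Fin n → Fin k => ∀ j, (Finset.univ.filter fun i => g i = j).card = s j),
          Nf * ∏ i, B i (g i) := by
    rw [← perm_sum c s hc (fun g => ∏ i, B i (g i))]
    exact Finset.sum_congr rfl (fun σ _ =>
      Finset.prod_congr rfl (fun i _ => by rw [hA]; rfl))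
  rw [hRHS]
  -- expand the product over rows into a sum over functions g
  have expand : ∀ f : (∀ j, Fin (s j + 1)),
      (∏ i, ∑ j, ((Real.sqrt (s j) : ℂ) * root (s j + 1) (f j)) * B i j)
        = ∑ g : Fin n → Fin k,
            ∏ i, ((Real.sqrt (s (g i)) : ℂ) * root (s (g i) + 1) (f (g i))) * B i (g i) := by
    intro f
    have := Finset.prod_univ_sum (fun _ : Fin n => (Finset.univ : Finset (Fin k)))
      (fun i j => ((Real.sqrt (s j) : ℂ) * root (s j + 1) (f j)) * B i j)
    simpa using this
  have key : (∑ f : (∀ j, Fin (s j + 1)),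
        C * (∏ j, (starRingEnd ℂ) ((Real.sqrt (s j) : ℂ) * root (s j + 1) (f j)) ^ s j) *
          ∏ i, ∑ j, ((Real.sqrt (s j) : ℂ) * root (s j + 1) (f j)) * B i j)
      = D * ∑ g ∈ Finset.univ.filter
          (fun g : Fin n → Fin k => ∀ j, (Finset.univ.filter fun i => g i = j).card = s j),
          Nf * ∏ i, B i (g i) := by
    calc (∑ f : (∀ j, Fin (s j + 1)),
        C * (∏ j, (starRingEnd ℂ) ((Real.sqrt (s j) : ℂ) * root (s j + 1) (f j)) ^ s j) *
          ∏ i, ∑ j, ((Real.sqrt (s j) : ℂ) * root (s j + 1) (f j)) * B i j)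
        = ∑ f : (∀ j, Fin (s j + 1)), ∑ g : Fin n → Fin k,
            C * ((∏ i, B i (g i)) *
              ∏ j, ((starRingEnd ℂ) ((Real.sqrt (s j) : ℂ) * root (s j + 1) (f j)) ^ s j *
                ((Real.sqrt (s j) : ℂ) * root (s j + 1) (f j))
                  ^ (Finset.univ.filter fun i => g i = j).card)) := by
          apply Finset.sum_congr rfl
          intro f _
          rw [expand f, Finset.mul_sum]
          apply Finset.sum_congr rfl
          intro g _
          rw [Finset.prod_mul_distrib,
            prod_comp_fiber g (fun j => (Real.sqrt (s j) : ℂ) * root (s j + 1) (f j)),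
            Finset.prod_mul_distrib]
          ring
      _ = ∑ g : Fin n → Fin k, C * ((∏ i, B i (g i)) *
            ∏ j, ∑ t : Fin (s j + 1),
              (starRingEnd ℂ) ((Real.sqrt (s j) : ℂ) * root (s j + 1) t) ^ s j *
                ((Real.sqrt (s j) : ℂ) * root (s j + 1) t)
                  ^ (Finset.univ.filter fun i => g i = j).card) := by
          rw [Finset.sum_comm]
          apply Finset.sum_congr rfl
          intro g _
          rw [← Finset.mul_sum, ← Finset.mul_sum]
          congr 1
          congr 1
          rw [Finset.prod_univ_sum (fun j => (Finset.univ : Finset (Fin (s j + 1))))]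
          simp
      _ = ∑ g : Fin n → Fin k,
            (if ∀ j, (Finset.univ.filter fun i => g i = j).card = s j
              then D * (Nf * ∏ i, B i (g i)) else 0) := by
          apply Finset.sum_congr rfl
          intro g _
          by_cases hM : ∀ j, (Finset.univ.filter fun i => g i = j).card = s j
          · rw [if_pos hM]
            have h1 : (∏ j, ∑ t : Fin (s j + 1),
                (starRingEnd ℂ) ((Real.sqrt (s j) : ℂ) * root (s j + 1) t) ^ s j *
                  ((Real.sqrt (s j) : ℂ) * root (s j + 1) t)
                    ^ (Finset.univ.filter fun i => g i = j).card)
                = S * D := by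
              rw [hSdef, hD, ← Finset.prod_mul_distrib]
              apply Finset.prod_congr rfl
              intro j _
              rw [hM j]
              exact T_eq (s j)
            rw [h1, hC, hNf]
            field_simp
          · rw [if_neg hM]
            have hex : ∃ j, (Finset.univ.filter fun i => g i = j).card < s j := by
              by_contra hno
              push_neg at hno
              apply hM
              have hle : ∀ j ∈ Finset.univ, s j ≤ (Finset.univ.filter fun i => g i = j).card :=
                fun j _ => hno j
              have heq : ∑ j, s j = ∑ j, (Finset.univ.filter fun i => g i = j).card := by
                rw [hsum, sum_fiber_card]
              intro j
              exact ((Finset.sum_eq_sum_iff_of_le hle).mp heq j (Finset.mem_univ j)).symm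
            obtain ⟨j1, hj1⟩ := hex
            have h0 : (∑ t : Fin (s j1 + 1),
                (starRingEnd ℂ) ((Real.sqrt (s j1) : ℂ) * root (s j1 + 1) t) ^ s j1 *
                  ((Real.sqrt (s j1) : ℂ) * root (s j1 + 1) t)
                    ^ (Finset.univ.filter fun i => g i = j1).card) = 0 :=
              T_lt (s j1) _ hj1
            rw [Finset.prod_eq_zero (Finset.mem_univ j1) h0]
            ring
      _ = D * ∑ g ∈ Finset.univ.filter
            (fun g : Fin n → Fin k => ∀ j, (Finset.univ.filter fun i => g i = j).card = s j),
            Nf * ∏ i, B i (g i) := by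
          rw [Finset.mul_sum, Finset.sum_filter]
  rw [key, mul_div_cancel_left₀ _ hDne]
end
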